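/- A function f : ℝ → ℝ satisfies f(x - f(x) + f(y)) = f(y) for all x, y ∈ ℝ with range of x ↦ x - f(x) equal to [-f(0), -f(0)+1) if and only if there exists a constant c ∈ ℝ such that f(x) = ⌊x⌋ + c for all x ∈ ℝ. -/

import Mathlib

theorem decomposer_shifted_Ico_iff_floor_add_const (f : ℝ → ℝ) :
    ((∀ x y : ℝ, f (x - f x + f y) = f y) ∧
      Set.range (fun x : ℝ => x - f x) = Set.Ico (-(f 0)) (-(f 0) + 1)) ↔
    ∃ c : ℝ, ∀ x : ℝ, f x = (⌊x⌋ : ℝ) + c := by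
  constructor
  · rintro ⟨h1, h2⟩
    refine ⟨f 0, ?_⟩
    set c := f 0 with hc
    -- f is constant on [f y - c, f y - c + 1) with value f y
    have constA : ∀ y t : ℝ, f y - c ≤ t → t < f y - c + 1 → f t = f y := by
      intro y t ht1 ht2
      have hm : t - f y ∈ Set.Ico (-c) (-c + 1) := ⟨by linarith, by linarith⟩
      rw [← h2] at hm
      obtain ⟨x, hx⟩ := hm
      simp only at hx
      have hteq : x - f x + f y = t := by linarith
      rw [← hteq, h1]
    -- every x lies in its own interval
    have memB : ∀ x : ℝ, f x - c ≤ x ∧ x < f x - c + 1 := by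
      intro x
      have hm : x - f x ∈ Set.range (fun x : ℝ => x - f x) := ⟨x, rfl⟩
      rw [h2] at hm
      exact ⟨by linarith [hm.1], by linarith [hm.2]⟩
    have key : ∀ n : ℤ, f (n : ℝ) = (n : ℝ) + c := by
      intro n
      induction n using Int.induction_on with
      | zero => simp [hc]
      | succ n ih =>
        push_cast at ih ⊢
        obtain ⟨hb1, hb2⟩ := memB ((n : ℝ) + 1)
        rcases lt_or_eq_of_le hb1 with hlt | heq
        · -- h := f(n+1) - c, with n < h < n+1 : contradiction
          exfalso
          have hgt : (n : ℝ) < f ((n : ℝ) + 1) - c := by linarith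
          have e1 : f (f ((n : ℝ) + 1) - c) = f (n : ℝ) :=
            constA (n : ℝ) _ (by rw [ih]; linarith) (by rw [ih]; linarith)
          have e2 : f (f ((n : ℝ) + 1) - c) = f ((n : ℝ) + 1) :=
            constA ((n : ℝ) + 1) _ (by linarith) (by linarith)
          rw [ih] at e1
          -- e2 ∘ e1 : f(n+1) = n + c, so h = n, contradicting n < h
          rw [e1] at e2
          linarith
        · linarith
      | pred n ih =>
        push_cast at ih ⊢
        -- goal : f (-n - 1) = -n - 1 + c, ih : f (-n) = -n + c
        obtain ⟨hb1, hb2⟩ := memB (-(n : ℝ) - 1)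
        rcases lt_or_eq_of_le hb1 with hlt | heq
        · exfalso
          -- h := f(-n-1) - c with -n-2 < h < -n-1
          have hgt : -(n : ℝ) - 2 < f (-(n : ℝ) - 1) - c := by linarith
          -- consider x := h + 1
          obtain ⟨hb1', hb2'⟩ := memB (f (-(n : ℝ) - 1) - c + 1)
          have hgt' : f (-(n : ℝ) - 1) - c < f (f (-(n : ℝ) - 1) - c + 1) - c := by linarith
          rcases lt_or_eq_of_le hb1' with hlt' | heq'
          · -- h < h' < h + 1 : h' lies both in I_{-n-1} and is left end of I_x
            have e1 : f (f (f (-(n : ℝ) - 1) - c + 1) - c) = f (-(n : ℝ) - 1) :=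
              constA (-(n : ℝ) - 1) _ (by linarith) (by linarith)
            have e2 : f (f (f (-(n : ℝ) - 1) - c + 1) - c) = f (f (-(n : ℝ) - 1) - c + 1) :=
              constA (f (-(n : ℝ) - 1) - c + 1) _ (by linarith) (by linarith)
            rw [e1] at e2
            -- e2 : f(-n-1) = f x, so h = h', contradicting h < h'
            linarith
          · -- h' = h + 1, so -n ∈ [h+1, h+2) = I_x, hence f(-n) = h + 1 + c
            have hmem1 : f (f (-(n : ℝ) - 1) - c + 1) - c ≤ -(n : ℝ) := by linarith
            have hmem2 : -(n : ℝ) < f (f (-(n : ℝ) - 1) - c + 1) - c + 1 := by linarith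
            have e3 : f (-(n : ℝ)) = f (f (-(n : ℝ) - 1) - c + 1) :=
              constA (f (-(n : ℝ) - 1) - c + 1) _ hmem1 hmem2
            rw [ih] at e3
            -- e3 : -n + c = f x = h' + c = h + 1 + c, so h = -n - 1, contra hlt
            linarith
        · linarith
    -- now conclude for all real x
    intro x
    obtain ⟨hb1, hb2⟩ := Int.floor_le x, Int.lt_floor_add_one x
    have := constA ((⌊x⌋ : ℝ)) x
      (by rw [key ⌊x⌋]; linarith [Int.floor_le x])
      (by rw [key ⌊x⌋]; linarith [Int.lt_floor_add_one x])
    rw [this, key ⌊x⌋]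
  · rintro ⟨c, hf⟩
    constructor
    · intro x y
      have harg : x - f x + f y = Int.fract x + (⌊y⌋ : ℝ) := by
        rw [hf x, hf y, Int.fract]; ring
      rw [harg, hf]
      have : ⌊Int.fract x + (⌊y⌋ : ℝ)⌋ = ⌊y⌋ := by
        rw [Int.floor_add_intCast, Int.floor_fract]
        simp
      rw [this, hf y]
    · have hf0 : f 0 = c := by rw [hf]; simp
      ext u
      simp only [Set.mem_range, Set.mem_Ico, hf0]
      constructor
      · rintro ⟨x, rfl⟩
        rw [hf x]
        constructor
        · linarith [Int.floor_le x]
        · linarith [Int.lt_floor_add_one x]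
      · rintro ⟨hu1, hu2⟩
        refine ⟨u + c, ?_⟩
        rw [hf (u + c)]
        have : ⌊u + c⌋ = 0 := Int.floor_eq_zero_iff.mpr ⟨by linarith, by linarith⟩
        rw [this]
        simp
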